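/- With B^fmaj_{n,k}(q) as above, Σ_{k=0}^{n} B^fmaj_{n,k}(q)·z^k = Σ_{π∈B_n} q^{fmaj(π)} · Π_{i=1}^{des_B(π)} (1 + z/q^{2i-1}), as an identity in Z[q,q^{-1}][z]. -/

import Mathlib

open Finset LaurentPolynomial

/-- `[m]_q = 1 + q + ... + q^{m-1}`. -/
def qnat {R : Type*} [CommRing R] (q : R) (m : ℕ) : R := ∑ i ∈ Finset.range m, q ^ i

/-- The Gaussian binomial coefficient, as a polynomial expression in `q`. -/
def qbin {R : Type*} [CommRing R] (q : R) : ℕ → ℕ → R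
  | 0, 0 => 1
  | 0, _ + 1 => 0
  | _ + 1, 0 => 1
  | n + 1, k + 1 => qbin q n k + q ^ (k + 1) * qbin q n (k + 1)

/-- A signed permutation of `{1,...,n}`, encoded as an (unsigned) permutation together
with a sign for each position. -/
abbrev SignedPerm (n : ℕ) := Equiv.Perm (Fin n) × (Fin n → Bool)

/-- The value `π_i ∈ {±1,...,±n}` (1-indexed) of a signed permutation; `π_0 = 0`. -/
def spVal {n : ℕ} (π : SignedPerm n) (i : ℕ) : ℤ :=
  if h : 1 ≤ i ∧ i ≤ n then
    (if π.2 ⟨i - 1, by omega⟩ then -(((π.1 ⟨i - 1, by omega⟩ : Fin n) : ℤ) + 1)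
     else ((π.1 ⟨i - 1, by omega⟩ : Fin n) : ℤ) + 1)
  else 0

/-- The type B descent set `Des_B(π) = {i ∈ {0,...,n-1} : π_i > π_{i+1}}` (with `π_0 = 0`). -/
def desSetB {n : ℕ} (π : SignedPerm n) : Finset ℕ :=
  (Finset.range n).filter fun i => spVal π (i + 1) < spVal π i

/-- `neg(π)`, the number of negative entries of a signed permutation. -/
def negB {n : ℕ} (π : SignedPerm n) : ℕ :=
  ((Finset.range n).filter fun i => spVal π (i + 1) < 0).card

/-- The flag-major index `fmaj(π) = 2 Σ_{i ∈ Des_B(π)} i + neg(π)`. -/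
def fmajB {n : ℕ} (π : SignedPerm n) : ℕ := 2 * ∑ i ∈ desSetB π, i + negB π

/-- The statistic `fmaj(π,S) = fmaj(π) - Σ_{j ∈ S} (2 |Des_B(π) ∩ {j,...,n-1}| - 1)`
of a descent-starred signed permutation (as an integer). -/
def fmajStar {n : ℕ} (π : SignedPerm n) (S : Finset ℕ) : ℤ :=
  (fmajB π : ℤ) - ∑ j ∈ S, (2 * (((desSetB π).filter fun t => j ≤ t).card : ℤ) - 1)

/-- `B^fmaj_{n,k}(q) = Σ_{(π,S), S ⊆ Des_B(π), |S| = k} q^{fmaj(π,S)}`,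
as a Laurent polynomial in `q`. -/
noncomputable def BfmajPoly (n k : ℕ) : LaurentPolynomial ℤ :=
  ∑ π : SignedPerm n, ∑ S ∈ (desSetB π).powersetCard k, T (fmajStar π S)

/-- The number of type B descents. -/
def desB {n : ℕ} (π : SignedPerm n) : ℕ := (desSetB π).card


section Aux

variable {R : Type*}

/-- rank statistic: number of elements of `D` that are `≥ j`. -/
private def rkw (D : Finset ℕ) (j : ℕ) : ℕ := (D.filter fun t => j ≤ t).card

private lemma rkw_anti {D : Finset ℕ} {j j' : ℕ} (hj : j ∈ D) (h : j < j') :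
    rkw D j' < rkw D j := by
  apply Finset.card_lt_card
  constructor
  · intro x hx
    simp only [Finset.mem_filter] at hx ⊢
    exact ⟨hx.1, by omega⟩
  · intro hsub
    have := hsub (Finset.mem_filter.2 ⟨hj, le_refl j⟩)
    simp only [Finset.mem_filter] at this
    omega

private lemma rkw_pos {D : Finset ℕ} {j : ℕ} (hj : j ∈ D) : 1 ≤ rkw D j :=
  Finset.card_pos.2 ⟨j, Finset.mem_filter.2 ⟨hj, le_refl j⟩⟩

private lemma rkw_le {D : Finset ℕ} (j : ℕ) : rkw D j ≤ D.card :=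
  Finset.card_filter_le _ _

private lemma T_sum {S : Finset ℕ} (f : ℕ → ℤ) :
    (T (∑ j ∈ S, f j) : LaurentPolynomial ℤ) = ∏ j ∈ S, T (f j) := by
  classical
  induction S using Finset.cons_induction with
  | empty => simp
  | cons a s ha ih => rw [Finset.sum_cons, Finset.prod_cons, T_add, ih]

private lemma key (n : ℕ) (D : Finset ℕ) (hD : D.card ≤ n) (m : ℤ) :
    ∑ k ∈ Finset.range (n + 1), ∑ S ∈ D.powersetCard k,
        Polynomial.C (T (m - ∑ j ∈ S, (2 * ((D.filter fun t => j ≤ t).card : ℤ) - 1))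
          : LaurentPolynomial ℤ) * Polynomial.X ^ k =
      Polynomial.C (T m : LaurentPolynomial ℤ) *
        ∏ i ∈ Finset.range D.card,
          (1 + Polynomial.C (T (-(2 * (i : ℤ) + 1)) : LaurentPolynomial ℤ) * Polynomial.X) := by
  classical
  set g : ℕ → Polynomial (LaurentPolynomial ℤ) :=
    fun j => Polynomial.C (T (-(2 * ((rkw D j : ℤ)) - 1)) : LaurentPolynomial ℤ) * Polynomial.X
    with hg
  have step1 : ∀ k, ∀ S ∈ D.powersetCard k,
      Polynomial.C (T (m - ∑ j ∈ S, (2 * ((D.filter fun t => j ≤ t).card : ℤ) - 1))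
        : LaurentPolynomial ℤ) * Polynomial.X ^ k =
      Polynomial.C (T m : LaurentPolynomial ℤ) * ∏ j ∈ S, g j := by
    intro k S hS
    obtain ⟨hSsub, hScard⟩ := Finset.mem_powersetCard.1 hS
    have hsum : m - ∑ j ∈ S, (2 * ((D.filter fun t => j ≤ t).card : ℤ) - 1)
        = m + ∑ j ∈ S, (-(2 * ((rkw D j : ℤ)) - 1)) := by
      rw [Finset.sum_neg_distrib]
      simp only [rkw]
      ring
    rw [hsum, T_add, T_sum, map_mul, map_prod, ← hScard, ← Finset.prod_const (Polynomial.X),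
      mul_assoc, ← Finset.prod_mul_distrib]
  calc
    ∑ k ∈ Finset.range (n + 1), ∑ S ∈ D.powersetCard k,
        Polynomial.C (T (m - ∑ j ∈ S, (2 * ((D.filter fun t => j ≤ t).card : ℤ) - 1))
          : LaurentPolynomial ℤ) * Polynomial.X ^ k
      = ∑ k ∈ Finset.range (D.card + 1), ∑ S ∈ D.powersetCard k,
          Polynomial.C (T m : LaurentPolynomial ℤ) * ∏ j ∈ S, g j := by
        rw [Finset.sum_congr rfl (fun k _ => Finset.sum_congr rfl (step1 k))]
        symm
        apply Finset.sum_subset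
        · intro k hk
          simp only [Finset.mem_range] at hk ⊢
          omega
        · intro k _ hk
          simp only [Finset.mem_range, not_lt] at hk
          rw [Finset.powersetCard_eq_empty.2 (by omega), Finset.sum_empty]
    _ = ∑ S ∈ D.powerset, Polynomial.C (T m : LaurentPolynomial ℤ) * ∏ j ∈ S, g j := by
        rw [Finset.powerset_card_disjiUnion]
        exact (Finset.sum_disjiUnion _ _ _).symm
    _ = Polynomial.C (T m : LaurentPolynomial ℤ) * ∑ S ∈ D.powerset, ∏ j ∈ S, g j := by
        rw [Finset.mul_sum]
    _ = Polynomial.C (T m : LaurentPolynomial ℤ) * ∏ j ∈ D, (g j + 1) := by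
        congr 1
        have h := Finset.prod_add g (fun _ => 1) D
        simp only [Finset.prod_const_one, mul_one] at h
        rw [h]
    _ = Polynomial.C (T m : LaurentPolynomial ℤ) *
          ∏ i ∈ Finset.range D.card,
            (1 + Polynomial.C (T (-(2 * (i : ℤ) + 1)) : LaurentPolynomial ℤ) * Polynomial.X) := by
        congr 1
        have hmem : ∀ j ∈ D, rkw D j - 1 ∈ Finset.range D.card := by
          intro j hj
          have h1 := rkw_pos hj
          have h2 := rkw_le (D := D) j
          simp only [Finset.mem_range]; omega
        have hinj : ∀ j₁ ∈ D, ∀ j₂ ∈ D, rkw D j₁ - 1 = rkw D j₂ - 1 → j₁ = j₂ := by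
          intro j₁ h₁ j₂ h₂ he
          by_contra hne
          rcases Nat.lt_or_ge j₁ j₂ with h | h
          · have := rkw_anti h₁ h
            have := rkw_pos h₂; omega
          · rcases Nat.lt_or_ge j₂ j₁ with h' | h'
            · have := rkw_anti h₂ h'
              have := rkw_pos h₁; omega
            · omega
        refine Finset.prod_bij (fun j hj => rkw D j - 1) hmem hinj ?_ ?_
        · have := Finset.surj_on_of_inj_on_of_card_le (s := D)
            (t := Finset.range D.card) (fun j hj => rkw D j - 1) hmem
            (fun a₁ a₂ h₁ h₂ => hinj a₁ h₁ a₂ h₂) (by simp)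
          intro b hb
          obtain ⟨a, ha, hab⟩ := this b hb
          exact ⟨a, ha, hab.symm⟩
        · intro j hj
          have h1 := rkw_pos hj
          have harg : -(2 * ((rkw D j - 1 : ℕ) : ℤ) + 1) = -(2 * (rkw D j : ℤ) - 1) := by
            have h2 : ((rkw D j - 1 : ℕ) : ℤ) = (rkw D j : ℤ) - 1 := by omega
            rw [h2]; ring
          rw [hg, harg, add_comm]

end Aux

theorem stmt10 (n : ℕ) :
    ∑ k ∈ Finset.range (n + 1),
        Polynomial.C (BfmajPoly n k) * Polynomial.X ^ k =
      ∑ π : SignedPerm n,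
        Polynomial.C (T (fmajB π : ℤ) : LaurentPolynomial ℤ) *
          ∏ i ∈ Finset.range (desB π),
            (1 + Polynomial.C (T (-(2 * (i : ℤ) + 1)) : LaurentPolynomial ℤ) * Polynomial.X) := by
  classical
  have hC : ∀ k, (Polynomial.C (BfmajPoly n k) : Polynomial (LaurentPolynomial ℤ))
      = ∑ π : SignedPerm n, ∑ S ∈ (desSetB π).powersetCard k,
          Polynomial.C (T (fmajStar π S) : LaurentPolynomial ℤ) := by
    intro k
    rw [BfmajPoly, map_sum]
    exact Finset.sum_congr rfl fun π _ => map_sum _ _ _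
  calc
    ∑ k ∈ Finset.range (n + 1), Polynomial.C (BfmajPoly n k) * Polynomial.X ^ k
      = ∑ k ∈ Finset.range (n + 1), ∑ π : SignedPerm n, ∑ S ∈ (desSetB π).powersetCard k,
          Polynomial.C (T (fmajStar π S) : LaurentPolynomial ℤ) * Polynomial.X ^ k := by
        refine Finset.sum_congr rfl fun k _ => ?_
        rw [hC, Finset.sum_mul]
        exact Finset.sum_congr rfl fun π _ => Finset.sum_mul _ _ _
    _ = ∑ π : SignedPerm n, ∑ k ∈ Finset.range (n + 1), ∑ S ∈ (desSetB π).powersetCard k,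
          Polynomial.C (T (fmajStar π S) : LaurentPolynomial ℤ) * Polynomial.X ^ k :=
        Finset.sum_comm
    _ = _ := by
        refine Finset.sum_congr rfl fun π _ => ?_
        have hcard : (desSetB π).card ≤ n := by
          calc (desSetB π).card ≤ (Finset.range n).card :=
                Finset.card_le_card (Finset.filter_subset _ _)
            _ = n := Finset.card_range n
        have := key n (desSetB π) hcard (fmajB π : ℤ)
        rw [desB, ← this]
        rfl
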